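/- Let G be a finite group, T a subgroup of order p, C = C_G(T), O_C = O_p(C), and suppose N_G(O_C) has characteristic p. Then C has characteristic p. -/

import Mathlib

/-- The largest normal `p`-subgroup `O_p(G)`: the join of all normal `p`-subgroups. -/
def pCore (p : ℕ) (G : Type*) [Group G] : Subgroup G :=
  ⨆ (N : Subgroup G) (_ : N.Normal) (_ : IsPGroup p N), N

/-- A group `G` has characteristic `p` if `C_G(O_p(G)) ≤ O_p(G)`. -/
def HasCharP (p : ℕ) (G : Type*) [Group G] : Prop :=
  Subgroup.centralizer (pCore p G : Set G) ≤ pCore p G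

/-- An element is `p`-central if it has order `p` and lies in the center of some
Sylow `p`-subgroup of `G`. -/
def IsPCentral (p : ℕ) {G : Type*} [Group G] (x : G) : Prop :=
  orderOf x = p ∧ ∃ S : Sylow p G,
    x ∈ (S : Subgroup G) ⊓ Subgroup.centralizer ((S : Subgroup G) : Set G)

/-- A `p`-subgroup `P` is `p`-centric if `Z(P) = P ⊓ C_G(P)` is a Sylow `p`-subgroup of
`C_G(P)`, expressed via maximality among `p`-subgroups of `C_G(P)`. -/
def IsPCentric (p : ℕ) {G : Type*} [Group G] (P : Subgroup G) : Prop :=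
  ∀ Q : Subgroup G, Q ≤ Subgroup.centralizer (P : Set G) → IsPGroup p Q →
    P ⊓ Subgroup.centralizer (P : Set G) ≤ Q →
    Q = P ⊓ Subgroup.centralizer (P : Set G)

/-- The step `P ↦ O_p(N_G(P))`, viewed as a subgroup of `G`. -/
def pRadicalStep (p : ℕ) {G : Type*} [Group G] (P : Subgroup G) : Subgroup G :=
  (pCore p ↥(Subgroup.normalizer (P : Set G))).map (Subgroup.normalizer (P : Set G)).subtype

/-- The chain `P₀ = Q`, `P_{i+1} = O_p(N_G(P_i))`. -/
def radChain (p : ℕ) {G : Type*} [Group G] (Q : Subgroup G) : ℕ → Subgroup G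
  | 0 => Q
  | n + 1 => pRadicalStep p (radChain p Q n)

/-- `G` has local characteristic `p`: every `p`-local subgroup has characteristic `p`. -/
def LocalCharP (p : ℕ) (G : Type*) [Group G] : Prop :=
  ∀ P : Subgroup G, P ≠ ⊥ → IsPGroup p P → HasCharP p ↥(Subgroup.normalizer (P : Set G))

/-- `G` has parabolic characteristic `p`: every `p`-local subgroup containing a Sylow
`p`-subgroup of `G` has characteristic `p`. -/
def ParabolicCharP (p : ℕ) (G : Type*) [Group G] : Prop :=
  ∀ P : Subgroup G, P ≠ ⊥ → IsPGroup p P →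
    (∃ S : Sylow p G, (S : Subgroup G) ≤ Subgroup.normalizer (P : Set G)) → HasCharP p ↥(Subgroup.normalizer (P : Set G))

section AuxLemmas

variable {p : ℕ} {G : Type*} [Group G]

lemma le_pCore {K : Subgroup G} (hn : K.Normal) (hpg : IsPGroup p K) : K ≤ pCore p G :=
  le_iSup_of_le K (le_iSup_of_le hn (le_iSup_of_le hpg le_rfl))

lemma mem_pCore_iff {x : G} :
    x ∈ pCore p G ↔ ∃ N : Subgroup G, N.Normal ∧ IsPGroup p N ∧ x ∈ N := by
  constructor
  · intro hx
    have heq : pCore p G = ⨆ N : {N : Subgroup G // N.Normal ∧ IsPGroup p N},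
        (N : Subgroup G) := by
      apply le_antisymm
      · exact iSup_le fun N => iSup_le fun hn => iSup_le fun hpg =>
          le_iSup_of_le ⟨N, hn, hpg⟩ le_rfl
      · exact iSup_le fun N => le_pCore N.2.1 N.2.2
    have hx' : x ∈ ⨆ N : {N : Subgroup G // N.Normal ∧ IsPGroup p N}, (N : Subgroup G) :=
      heq ▸ hx
    haveI : Nonempty {N : Subgroup G // N.Normal ∧ IsPGroup p N} :=
      ⟨⟨⊥, inferInstance, IsPGroup.of_bot⟩⟩
    have hdir : Directed (· ≤ ·)
        (fun N : {N : Subgroup G // N.Normal ∧ IsPGroup p N} => (N : Subgroup G)) := by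
      rintro ⟨N₁, hn₁, hp₁⟩ ⟨N₂, hn₂, hp₂⟩
      haveI := hn₁; haveI := hn₂
      exact ⟨⟨N₁ ⊔ N₂, inferInstance, hp₁.to_sup_of_normal_right hp₂⟩,
        le_sup_left, le_sup_right⟩
    obtain ⟨⟨N, hn, hpg⟩, hxN⟩ := (Subgroup.mem_iSup_of_directed hdir).mp hx'
    exact ⟨N, hn, hpg, hxN⟩
  · rintro ⟨N, hn, hpg, hxN⟩
    exact le_pCore hn hpg hxN

lemma pCore_normal : (pCore p G).Normal := by
  constructor
  intro x hx g
  rcases mem_pCore_iff.mp hx with ⟨N, hn, hpg, hxN⟩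
  exact le_pCore hn hpg (hn.conj_mem x hxN g)

lemma pCore_isPGroup : IsPGroup p (pCore p G) := by
  intro g
  rcases mem_pCore_iff.mp g.2 with ⟨N, hn, hpg, hxN⟩
  obtain ⟨k, hk⟩ := hpg ⟨g.1, hxN⟩
  refine ⟨k, Subtype.ext ?_⟩
  simpa using congrArg Subtype.val hk

lemma pgroup_elem {S : Subgroup G} (h : IsPGroup p S) :
    ∀ s ∈ S, ∃ k, s ^ p ^ k = 1 := by
  intro s hs
  obtain ⟨k, hk⟩ := h ⟨s, hs⟩
  exact ⟨k, by simpa using congrArg Subtype.val hk⟩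

lemma le_normalizer_map {D : Subgroup G} {K : Subgroup ↥D} (hK : K.Normal) :
    D ≤ Subgroup.normalizer ((K.map D.subtype : Subgroup G) : Set G) := by
  intro g hg
  rw [Subgroup.mem_normalizer_iff]
  intro h
  constructor
  · rintro ⟨k, hk, rfl⟩
    exact ⟨⟨g, hg⟩ * k * ⟨g, hg⟩⁻¹, hK.conj_mem k hk ⟨g, hg⟩, rfl⟩
  · rintro ⟨k, hk, hk'⟩
    refine ⟨⟨g, hg⟩⁻¹ * k * (⟨g, hg⟩⁻¹)⁻¹, hK.conj_mem k hk ⟨g, hg⟩⁻¹, ?_⟩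
    have : (k : G) = g * h * g⁻¹ := hk'
    simp [this]
    group

lemma le_map_pCore {D S : Subgroup G} (hSD : S ≤ D)
    (hnorm : ∀ d ∈ D, ∀ s ∈ S, d * s * d⁻¹ ∈ S)
    (hpe : ∀ s ∈ S, ∃ k, s ^ p ^ k = 1) :
    S ≤ (pCore p ↥D).map D.subtype := by
  have h1 : (S.subgroupOf D).Normal := by
    constructor
    rintro n hn g
    rw [Subgroup.mem_subgroupOf] at hn ⊢
    exact hnorm g.1 g.2 n.1 hn
  have h2 : IsPGroup p (S.subgroupOf D) := by
    rintro x
    obtain ⟨k, hk⟩ := hpe x.1.1 (Subgroup.mem_subgroupOf.mp x.2)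
    exact ⟨k, Subtype.ext (Subtype.ext (by simpa using hk))⟩
  intro x hx
  exact ⟨⟨x, hSD hx⟩, le_pCore h1 h2 (Subgroup.mem_subgroupOf.mpr hx), rfl⟩

end AuxLemmas

/-- If `T` has order `p`, `C = C_G(T)`, `O_C = O_p(C)`, and `N_G(O_C)` has
characteristic `p`, then `C` has characteristic `p`. -/
theorem stmt15 (p : ℕ) [Fact p.Prime] (G : Type*) [Group G] [Finite G]
    (t : G) (ht : orderOf t = p) (T C O : Subgroup G)
    (hT : T = Subgroup.zpowers t) (hC : C = Subgroup.centralizer (T : Set G))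
    (hO : O = (pCore p ↥C).map C.subtype)
    (hchar : HasCharP p ↥(Subgroup.normalizer (O : Set G))) :
    HasCharP p ↥C := by
  subst hT
  have hp : p.Prime := Fact.out
  set N := Subgroup.normalizer (O : Set G) with hN
  set Q : Subgroup G := (pCore p ↥N).map N.subtype with hQ
  -- elementary facts about T = zpowers t
  have htp : t ^ p = 1 := ht ▸ pow_orderOf_eq_one t
  have hTC : Subgroup.zpowers t ≤ C := by
    rw [hC]
    intro x hx
    rw [Subgroup.mem_centralizer_iff]
    intro g hg
    obtain ⟨n, rfl⟩ := Subgroup.mem_zpowers_iff.mp hg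
    obtain ⟨m, rfl⟩ := Subgroup.mem_zpowers_iff.mp hx
    exact zpow_mul_comm t n m
  have hTp : ∀ x ∈ Subgroup.zpowers t, x ^ p = 1 := by
    intro x hx
    obtain ⟨m, rfl⟩ := Subgroup.mem_zpowers_iff.mp hx
    have : (t ^ m) ^ (p : ℕ) = (t ^ (p : ℕ)) ^ m := by
      rw [← zpow_natCast (t ^ m), ← zpow_mul, mul_comm, zpow_mul, zpow_natCast]
    rw [this, htp, one_zpow]
  -- T ≤ O
  have hTO : Subgroup.zpowers t ≤ O := by
    rw [hO]
    refine le_map_pCore hTC ?_ ?_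
    · intro d hd s hs
      have hcomm : s * d = d * s := by
        rw [hC] at hd
        exact Subgroup.mem_centralizer_iff.mp hd s hs
      have : d * s * d⁻¹ = s := by rw [← hcomm]; group
      rwa [this]
    · intro s hs
      exact ⟨1, by rw [pow_one]; exact hTp s hs⟩
  -- X := centralizer O ≤ C
  have hXC : Subgroup.centralizer (O : Set G) ≤ C := by
    rw [hC]
    exact Subgroup.centralizer_le fun x hx => hTO hx
  -- C ≤ N
  have hCN : C ≤ N := by
    rw [hN, hO]
    exact le_normalizer_map pCore_normal
  -- X ≤ N
  have hXN : Subgroup.centralizer (O : Set G) ≤ N := by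
    rw [hN]
    intro g hg
    rw [Subgroup.mem_centralizer_iff] at hg
    rw [Subgroup.mem_normalizer_iff]
    intro h
    constructor
    · intro hh
      have e : g * h * g⁻¹ = h := by rw [← hg h hh]; group
      rwa [e]
    · intro hh
      have e := hg _ hh
      -- e : (g*h*g⁻¹) * g = g * (g*h*g⁻¹)
      have : h = g * h * g⁻¹ := by
        have e2 : g * h = g * (g * h * g⁻¹) := by
          calc g * h = g * h * g⁻¹ * g := by group
          _ = g * (g * h * g⁻¹) := e
        have := mul_left_cancel e2
        exact this
      rwa [← this] at hh
  -- N normalizes X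
  have hNX : ∀ g ∈ N, ∀ x ∈ Subgroup.centralizer (O : Set G),
      g * x * g⁻¹ ∈ Subgroup.centralizer (O : Set G) := by
    intro g hg x hx
    rw [Subgroup.mem_centralizer_iff] at hx ⊢
    intro h hh
    have hgN : g ∈ Subgroup.normalizer (O : Set G) := by rw [← hN]; exact hg
    have h' : g⁻¹ * h * g ∈ O := (Subgroup.mem_normalizer_iff''.mp hgN h).mp hh
    calc h * (g * x * g⁻¹) = g * ((g⁻¹ * h * g) * x) * g⁻¹ := by group
      _ = g * (x * (g⁻¹ * h * g)) * g⁻¹ := by rw [hx _ h']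
      _ = (g * x * g⁻¹) * h := by group
  -- O is a p-group (elementwise)
  have hOpe : ∀ s ∈ O, ∃ k, s ^ p ^ k = 1 := by
    have : IsPGroup p O := by
      rw [hO]; exact pCore_isPGroup.map C.subtype
    exact pgroup_elem this
  -- Q facts
  have hQN : Q ≤ N := by rw [hQ]; exact Subgroup.map_subtype_le _
  have hQpe : ∀ s ∈ Q, ∃ k, s ^ p ^ k = 1 := by
    have : IsPGroup p Q := by rw [hQ]; exact pCore_isPGroup.map N.subtype
    exact pgroup_elem this
  have hNQ : ∀ g ∈ N, ∀ q ∈ Q, g * q * g⁻¹ ∈ Q := by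
    have h : N ≤ Subgroup.normalizer (Q : Set G) := by rw [hQ]; exact le_normalizer_map pCore_normal
    intro g hg q hq
    exact (Subgroup.mem_normalizer_iff.mp (h hg) q).mp hq
  -- characteristic p of N, elementwise
  have hcharQ : ∀ g ∈ N, (∀ q ∈ Q, q * g = g * q) → g ∈ Q := by
    intro g hg hcomm
    have hmem : (⟨g, hg⟩ : ↥N) ∈
        Subgroup.centralizer ((pCore p ↥N : Subgroup ↥N) : Set ↥N) := by
      rw [Subgroup.mem_centralizer_iff]
      intro h hh
      have hhQ : (h : G) ∈ Q := by rw [hQ]; exact ⟨h, hh, rfl⟩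
      exact Subtype.ext (hcomm h hhQ)
    have := hchar hmem
    rw [hQ]
    exact ⟨⟨g, hg⟩, this, rfl⟩
  -- O ≤ N and O ≤ Q
  have hON : O ≤ N := by rw [hN]; exact Subgroup.le_normalizer
  have hOQ : O ≤ Q := by
    rw [hQ]
    refine le_map_pCore hON ?_ hOpe
    intro d hd s hs
    have hd' : d ∈ Subgroup.normalizer (O : Set G) := by rw [← hN]; exact hd
    exact (Subgroup.mem_normalizer_iff.mp hd' s).mp hs
  -- Q ⊓ C ≤ O
  have hQCO : ∀ x, x ∈ Q → x ∈ C → x ∈ O := by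
    have h : Q ⊓ C ≤ (pCore p ↥C).map C.subtype := by
      refine le_map_pCore inf_le_right ?_ ?_
      · intro d hd s hs
        rw [Subgroup.mem_inf] at hs ⊢
        exact ⟨hNQ d (hCN hd) s hs.1, mul_mem (mul_mem hd hs.2) (inv_mem hd)⟩
      · intro s hs
        rw [Subgroup.mem_inf] at hs
        exact hQpe s hs.1
    intro x h1 h2
    rw [hO]
    exact h (Subgroup.mem_inf.mpr ⟨h1, h2⟩)
  -- the key claim: X is a p-group (elementwise)
  have hXpe : ∀ y ∈ Subgroup.centralizer (O : Set G), ∃ k, y ^ p ^ k = 1 := by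
    intro y hy
    have hyN : y ∈ N := hXN hy
    have hm : orderOf y ≠ 0 := (orderOf_pos y).ne'
    set m := orderOf y with hmdef
    set k := m.factorization p with hkdef
    set m' := m / p ^ k with hm'def
    refine ⟨k, ?_⟩
    set z := y ^ p ^ k with hzdef
    have hzX : z ∈ Subgroup.centralizer (O : Set G) := pow_mem hy _
    have hzm : z ^ m' = 1 := by
      rw [hzdef, ← pow_mul]
      have e : p ^ k * m' = m := Nat.ordProj_mul_ordCompl_eq_self m p
      rw [e, hmdef]
      exact pow_orderOf_eq_one y
    have hpm' : ¬ p ∣ m' := Nat.not_dvd_ordCompl hp hm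
    -- z centralizes Q
    have hzcomm : ∀ q ∈ Q, q * z = z * q := by
      intro q hq
      -- commutators of powers of z with q lie in O
      have hcQ : ∀ n : ℕ, z ^ n * q * (z ^ n)⁻¹ * q⁻¹ ∈ O := by
        intro n
        have hznX : z ^ n ∈ Subgroup.centralizer (O : Set G) := pow_mem hzX n
        have h1 : z ^ n * q * (z ^ n)⁻¹ * q⁻¹ ∈ Q :=
          mul_mem (hNQ (z ^ n) (hXN hznX) q hq) (inv_mem hq)
        have h2 : z ^ n * q * (z ^ n)⁻¹ * q⁻¹ ∈ C := by
          have hx1 : q * (z ^ n)⁻¹ * q⁻¹ ∈ Subgroup.centralizer (O : Set G) :=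
            hNX q (hQN hq) ((z ^ n)⁻¹) (inv_mem hznX)
          have hx2 : z ^ n * (q * (z ^ n)⁻¹ * q⁻¹) ∈ Subgroup.centralizer (O : Set G) :=
            mul_mem hznX hx1
          have := hXC hx2
          rwa [show z ^ n * (q * (z ^ n)⁻¹ * q⁻¹) = z ^ n * q * (z ^ n)⁻¹ * q⁻¹ by group]
            at this
        exact hQCO _ h1 h2
      -- the commutator power identity
      have hcn : ∀ n : ℕ, z ^ n * q * (z ^ n)⁻¹ * q⁻¹ = (z * q * z⁻¹ * q⁻¹) ^ n := by
        intro n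
        induction n with
        | zero => simp
        | succ n ih =>
          have hyc : z * (z ^ n * q * (z ^ n)⁻¹ * q⁻¹) * z⁻¹
              = z ^ n * q * (z ^ n)⁻¹ * q⁻¹ := by
            have := Subgroup.mem_centralizer_iff.mp hzX _ (hcQ n)
            rw [← this]; group
          calc z ^ (n + 1) * q * (z ^ (n + 1))⁻¹ * q⁻¹
              = (z * (z ^ n * q * (z ^ n)⁻¹ * q⁻¹) * z⁻¹) * (z * q * z⁻¹ * q⁻¹) := by
                rw [pow_succ' z n]; group
            _ = (z ^ n * q * (z ^ n)⁻¹ * q⁻¹) * (z * q * z⁻¹ * q⁻¹) := by rw [hyc]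
            _ = (z * q * z⁻¹ * q⁻¹) ^ (n + 1) := by rw [ih, ← pow_succ]
      have hcm : (z * q * z⁻¹ * q⁻¹) ^ m' = 1 := by
        rw [← hcn m', hzm]; simp
      have hcQmem : z * q * z⁻¹ * q⁻¹ ∈ Q :=
        mul_mem (hNQ z (hXN hzX) q hq) (inv_mem hq)
      obtain ⟨j, hj⟩ := hQpe _ hcQmem
      have hd1 : orderOf (z * q * z⁻¹ * q⁻¹) ∣ m' := orderOf_dvd_of_pow_eq_one hcm
      have hd2 : orderOf (z * q * z⁻¹ * q⁻¹) ∣ p ^ j := orderOf_dvd_of_pow_eq_one hj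
      have hcop : Nat.gcd (p ^ j) m' = 1 :=
        ((Nat.Prime.coprime_iff_not_dvd hp).mpr hpm').pow_left j
      have h1 : orderOf (z * q * z⁻¹ * q⁻¹) ∣ 1 := hcop ▸ Nat.dvd_gcd hd2 hd1
      have hc1 : z * q * z⁻¹ * q⁻¹ = 1 :=
        orderOf_eq_one_iff.mp (Nat.dvd_one.mp h1)
      have : z * q = q * z := by
        have e : z * q * z⁻¹ = q := by
          have := hc1
          calc z * q * z⁻¹ = z * q * z⁻¹ * q⁻¹ * q := by group
          _ = q := by rw [hc1]; group
        calc z * q = (z * q * z⁻¹) * z := by group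
        _ = q * z := by rw [e]
      exact this.symm
    -- z ∈ Q, but z is a p'-element, so z = 1
    have hzQ : z ∈ Q := hcharQ z (hXN hzX) hzcomm
    obtain ⟨j, hj⟩ := hQpe z hzQ
    have hdz : orderOf z ∣ p ^ j := orderOf_dvd_of_pow_eq_one hj
    have hzo : orderOf z = m' := by
      rw [hzdef, orderOf_pow, ← hmdef, Nat.gcd_eq_right (Nat.ordProj_dvd m p), hm'def]
    rw [hzo] at hdz
    have hcop : Nat.Coprime m' (p ^ j) :=
      (((Nat.Prime.coprime_iff_not_dvd hp).mpr hpm').pow_left j).symm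
    have : m' = 1 := Nat.Coprime.eq_one_of_dvd hcop hdz
    have : orderOf z = 1 := by rw [hzo, this]
    have hz1 : z = 1 := orderOf_eq_one_iff.mp this
    exact hz1
  -- conclude: X ≤ O, hence C has characteristic p
  have hXO : ∀ y ∈ Subgroup.centralizer (O : Set G), y ∈ O := by
    have h := le_map_pCore (p := p) hXC
      (fun d hd x hx => hNX d (hCN hd) x hx) hXpe
    intro y hy
    rw [hO]
    exact h hy
  show Subgroup.centralizer ((pCore p ↥C : Subgroup ↥C) : Set ↥C) ≤ pCore p ↥C
  intro c hc
  have hcX : (c : G) ∈ Subgroup.centralizer (O : Set G) := by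
    rw [Subgroup.mem_centralizer_iff]
    intro h hh
    have hh' : h ∈ O := hh
    rw [hO, Subgroup.mem_map] at hh'
    obtain ⟨x, hx, rfl⟩ := hh'
    have := Subgroup.mem_centralizer_iff.mp hc x hx
    exact congrArg Subtype.val this
  have := hXO _ hcX
  rw [hO, Subgroup.mem_map] at this
  obtain ⟨x, hx, hx'⟩ := this
  have : x = c := Subtype.ext hx'
  rwa [← this]
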